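/- In the normal game on the 1×n board with target string SOSO = [S,O,S,O], for every n the game is a draw: neither player can force a win. -/

import Mathlib

/-- The two letters of the SOS game. -/
inductive Letter : Type
  | S : Letter
  | O : Letter
  deriving DecidableEq

open Letter

/-- The target string `t` occurs left-to-right as a consecutive block on the
linear board `b`. -/
def Achieves {n : ℕ} (t : List Letter) (b : Fin n → Option Letter) : Prop :=
  ∃ i : ℕ, ∀ j : ℕ, (hj : j < t.length) → ∃ h : i + j < n,
    b ⟨i + j, h⟩ = some (t.get ⟨j, hj⟩)

/-- `Force Win m w b`: the player to move in position `b` (with `m` remaining moves,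
i.e. `m` empty cells) can force a win when `w = true`, resp. can force at least a
draw when `w = false`, in the normal game whose winning boards are given by `Win`
(a player wins if the board satisfies `Win` immediately after their move). -/
def Force {α : Type} [DecidableEq α] (Win : (α → Option Letter) → Prop) :
    ℕ → Bool → (α → Option Letter) → Prop
  | 0, w, _ => w = false
  | m + 1, w, b => ∃ i : α, ∃ x : Letter, b i = none ∧
      (Win (Function.update b i (some x)) ∨
        ¬ Force Win m (!w) (Function.update b i (some x)))

/-- The first player can force a win in the normal game with target `t`
on the (initially empty) 1×n board. -/
def FirstWins (t : List Letter) (n : ℕ) : Prop :=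
  Force (Achieves t) n true (fun _ : Fin n => none)

/-- The second player can force a win in the normal game with target `t`
on the (initially empty) 1×n board: the first player (to move) cannot even
force a draw. -/
def SecondWins (t : List Letter) (n : ℕ) : Prop :=
  ¬ Force (Achieves t) n false (fun _ : Fin n => none)

/-- The normal game with target `t` on the 1×n board is a draw under optimal
play: the first player can force at least a draw, and the second player can
force at least a draw (i.e. the first player cannot force a win). -/
def IsDraw (t : List Letter) (n : ℕ) : Prop :=
  Force (Achieves t) n false (fun _ : Fin n => none) ∧
    ¬ Force (Achieves t) n true (fun _ : Fin n => none)

/-- The normal game on the 1×n board with target string SOSO is a draw for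
every `n`: neither player can force a win. -/
-- ### auxiliary ℕ-level development
abbrev SOSO : List Letter := [S, O, S, O]

def Achv (c : ℕ → Option Letter) : Prop :=
  ∃ s, c s = some S ∧ c (s+1) = some O ∧ c (s+2) = some S ∧ c (s+3) = some O

def updc (c : ℕ → Option Letter) (k : ℕ) (x : Letter) : ℕ → Option Letter :=
  fun m => if m = k then some x else c m

lemma updc_self (c : ℕ → Option Letter) (k : ℕ) (x : Letter) : updc c k x k = some x :=
  if_pos rfl

lemma updc_ne (c : ℕ → Option Letter) (k : ℕ) (x : Letter) {m : ℕ} (h : m ≠ k) :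
    updc c k x m = c m := if_neg h

def Thr (c : ℕ → Option Letter) (n : ℕ) : Prop :=
  ∃ k x, k < n ∧ c k = none ∧ Achv (updc c k x)

lemma both_in_window (c : ℕ → Option Letter) (n i k : ℕ) (x y : Letter)
    (hk : k < n) (hck : c k = none)
    (hxA : ¬ Achv (updc c i x)) (hT : ¬ Thr c n)
    (hach : Achv (updc (updc c i x) k y)) :
    ∃ s, s ≤ i ∧ i ≤ s + 3 ∧ s ≤ k ∧ k ≤ s + 3 ∧
      updc (updc c i x) k y s = some S ∧
      updc (updc c i x) k y (s+1) = some O ∧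
      updc (updc c i x) k y (s+2) = some S ∧
      updc (updc c i x) k y (s+3) = some O := by
  obtain ⟨s, e0, e1, e2, e3⟩ := hach
  by_cases hiw : s ≤ i ∧ i ≤ s + 3
  · by_cases hkw : s ≤ k ∧ k ≤ s + 3
    · exact ⟨s, hiw.1, hiw.2, hkw.1, hkw.2, e0, e1, e2, e3⟩
    · exfalso
      have hne : ∀ p, s ≤ p → p ≤ s + 3 → p ≠ k := by
        intro p h1 h2 hpk
        exact hkw ⟨hpk ▸ h1, hpk ▸ h2⟩
      have hd : ∀ p, p ≠ k → updc (updc c i x) k y p = updc c i x p := by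
        intro p hp; exact if_neg hp
      apply hxA
      exact ⟨s, (hd s (hne s (by omega) (by omega))).symm.trans e0,
        (hd (s+1) (hne (s+1) (by omega) (by omega))).symm.trans e1,
        (hd (s+2) (hne (s+2) (by omega) (by omega))).symm.trans e2,
        (hd (s+3) (hne (s+3) (by omega) (by omega))).symm.trans e3⟩
  · exfalso
    have hne : ∀ p, s ≤ p → p ≤ s + 3 → p ≠ i := by
      intro p h1 h2 hpi
      exact hiw ⟨hpi ▸ h1, hpi ▸ h2⟩
    have hd : ∀ p, p ≠ i → updc (updc c i x) k y p = updc c k y p := by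
      intro p hp
      by_cases hpk : p = k
      · subst hpk; rw [updc_self, updc_self]
      · rw [updc_ne _ _ _ hpk, updc_ne _ _ _ hp, updc_ne _ _ _ hpk]
    apply hT
    exact ⟨k, y, hk, hck, s, (hd s (hne s (by omega) (by omega))).symm.trans e0,
      (hd (s+1) (hne (s+1) (by omega) (by omega))).symm.trans e1,
      (hd (s+2) (hne (s+2) (by omega) (by omega))).symm.trans e2,
      (hd (s+3) (hne (s+3) (by omega) (by omega))).symm.trans e3⟩

lemma core (c : ℕ → Option Letter) (n i : ℕ) (hi : i < n) (hci : c i = none)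
    (hleft : ∀ k, k < i → c k ≠ none)
    (hT : ¬ Thr c n) :
    ∃ x : Letter, ¬ Achv (updc c i x) ∧ ¬ Thr (updc c i x) n := by
  have notA : ∀ x, ¬ Achv (updc c i x) := fun x h => hT ⟨i, x, hi, hci, h⟩
  have key : ∀ x : Letter,
      (∀ k y, k < n → c k = none → i < k → ¬ Achv (updc (updc c i x) k y)) →
      ¬ Thr (updc c i x) n := by
    intro x hx hthr
    obtain ⟨k, y, hk, hkn, hach⟩ := hthr
    have hki : k ≠ i := by
      rintro rfl
      rw [updc_self] at hkn
      cases hkn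
    have hck : c k = none := by rwa [updc_ne _ _ _ hki] at hkn
    have hik : i < k := by
      rcases Nat.lt_trichotomy i k with h | h | h
      · exact h
      · exact absurd h.symm hki
      · exact absurd hck (hleft k h)
    exact hx k y hk hck hik hach
  by_cases hC : c (i-1) = some S ∧ 1 ≤ i ∧
      ((c (i+1) = none ∧ c (i+2) = some O) ∨ (c (i+1) = some S ∧ c (i+2) = none))
  · -- play S
    refine ⟨S, notA S, key S ?_⟩
    intro k y hk hck hik hach
    obtain ⟨s, hsi, his, hsk, hks, e0, e1, e2, e3⟩ :=
      both_in_window c n i k S y hk hck (notA S) hT hach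
    obtain ⟨hC1, hCi, hC3⟩ := hC
    have hikne : i ≠ k := Nat.ne_of_lt hik
    have hdI : updc (updc c i S) k y i = some S := by
      rw [updc_ne _ _ _ hikne, updc_self]
    have hdc : ∀ p, p ≠ i → p ≠ k → updc (updc c i S) k y p = c p := by
      intro p h1 h2; rw [updc_ne _ _ _ h2, updc_ne _ _ _ h1]
    rcases (show i = s ∨ i = s+1 ∨ i = s+2 ∨ i = s+3 by omega) with h | h | h | h
    · subst h
      rcases (show k = i+1 ∨ k = i+2 ∨ k = i+3 by omega) with hk' | hk' | hk'
      · subst hk'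
        have h2 : c (i+2) = some S := by
          rw [← hdc (i+2) (by omega) (by omega)]; exact e2
        rcases hC3 with ⟨hD1, hD2⟩ | ⟨hE1, hE2⟩
        · rw [hD2] at h2; exact absurd h2 (by decide)
        · rw [hE1] at hck; cases hck
      · subst hk'
        rcases hC3 with ⟨hD1, hD2⟩ | ⟨hE1, hE2⟩
        · rw [hD2] at hck; cases hck
        · have h1 : c (i+1) = some O := by
            rw [← hdc (i+1) (by omega) (by omega)]; exact e1
          rw [hE1] at h1; exact absurd h1 (by decide)
      · subst hk'
        have h1 : c (i+1) = some O := by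
          rw [← hdc (i+1) (by omega) (by omega)]; exact e1
        rcases hC3 with ⟨hD1, hD2⟩ | ⟨hE1, hE2⟩
        · rw [hD1] at h1; cases h1
        · rw [hE1] at h1; exact absurd h1 (by decide)
    · subst h
      rw [hdI] at e1
      exact absurd e1 (by decide)
    · -- i = s + 2 ; then c (i-1) = c (s+1) must be some O, but hC1 says some S
      have h1 : c (s+1) = some O := by
        rw [← hdc (s+1) (by omega) (by omega)]; exact e1
      rw [show i - 1 = s + 1 by omega] at hC1
      rw [hC1] at h1; exact absurd h1 (by decide)
    · omega
  · -- play O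
    refine ⟨O, notA O, key O ?_⟩
    intro k y hk hck hik hach
    obtain ⟨s, hsi, his, hsk, hks, e0, e1, e2, e3⟩ :=
      both_in_window c n i k O y hk hck (notA O) hT hach
    have hikne : i ≠ k := Nat.ne_of_lt hik
    have hdI : updc (updc c i O) k y i = some O := by
      rw [updc_ne _ _ _ hikne, updc_self]
    have hdc : ∀ p, p ≠ i → p ≠ k → updc (updc c i O) k y p = c p := by
      intro p h1 h2; rw [updc_ne _ _ _ h2, updc_ne _ _ _ h1]
    rcases (show i = s ∨ i = s+1 ∨ i = s+2 ∨ i = s+3 by omega) with h | h | h | h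
    · subst h
      rw [hdI] at e0
      exact absurd e0 (by decide)
    · -- i = s+1
      have h0 : c s = some S := by
        rw [← hdc s (by omega) (by omega)]; exact e0
      apply hC
      refine ⟨by rw [show i - 1 = s by omega]; exact h0, by omega, ?_⟩
      rcases (show k = s+2 ∨ k = s+3 by omega) with hk' | hk'
      · left
        constructor
        · rw [show i + 1 = s + 2 by omega, ← hk']; exact hck
        · rw [show i + 2 = s + 3 by omega, ← hdc (s+3) (by omega) (by omega)]; exact e3
      · right
        constructor
        · rw [show i + 1 = s + 2 by omega, ← hdc (s+2) (by omega) (by omega)]; exact e2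
        · rw [show i + 2 = s + 3 by omega, ← hk']; exact hck
    · subst h
      rw [hdI] at e2
      exact absurd e2 (by decide)
    · omega

def extb {n : ℕ} (b : Fin n → Option Letter) : ℕ → Option Letter :=
  fun k => if h : k < n then b ⟨k, h⟩ else none

lemma extb_lt {n : ℕ} (b : Fin n → Option Letter) {k : ℕ} (h : k < n) :
    extb b k = b ⟨k, h⟩ := dif_pos h

lemma achieves_iff {n : ℕ} (b : Fin n → Option Letter) :
    Achieves SOSO b ↔ Achv (extb b) := by
  constructor
  · rintro ⟨s, h⟩
    obtain ⟨h0, e0⟩ := h 0 (by norm_num)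
    obtain ⟨h1, e1⟩ := h 1 (by norm_num)
    obtain ⟨h2, e2⟩ := h 2 (by norm_num)
    obtain ⟨h3, e3⟩ := h 3 (by norm_num)
    refine ⟨s, ?_, ?_, ?_, ?_⟩
    · rw [extb_lt b (show s < n by omega)]
      have : (⟨s, by omega⟩ : Fin n) = ⟨s + 0, h0⟩ := by simp
      rw [this]; exact e0
    · rw [extb_lt b (show s + 1 < n by omega)]; exact e1
    · rw [extb_lt b (show s + 2 < n by omega)]; exact e2
    · rw [extb_lt b (show s + 3 < n by omega)]; exact e3
  · rintro ⟨s, e0, e1, e2, e3⟩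
    have hb : s + 3 < n := by
      by_contra h
      rw [extb, dif_neg h] at e3
      cases e3
    refine ⟨s, ?_⟩
    intro j hj
    have hj4 : j < 4 := by simpa using hj
    interval_cases j
    · exact ⟨by omega, by
        rw [← extb_lt b (show s + 0 < n by omega)]; simpa using e0⟩
    · exact ⟨by omega, by rw [← extb_lt b (show s + 1 < n by omega)]; exact e1⟩
    · exact ⟨by omega, by rw [← extb_lt b (show s + 2 < n by omega)]; exact e2⟩
    · exact ⟨by omega, by rw [← extb_lt b (show s + 3 < n by omega)]; exact e3⟩

lemma extb_update {n : ℕ} (b : Fin n → Option Letter) (i : Fin n) (x : Letter) :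
    extb (Function.update b i (some x)) = updc (extb b) i.val x := by
  funext k
  by_cases h : k < n
  · rw [extb, dif_pos h, updc]
    by_cases hk : k = i.val
    · rw [if_pos hk, Function.update_apply, if_pos (Fin.ext hk)]
    · rw [if_neg hk, Function.update_apply,
        if_neg (fun he => hk (congrArg Fin.val he)), extb, dif_pos h]
  · rw [extb, dif_neg h, updc, if_neg (show ¬ k = i.val from fun he => h (lt_of_eq_of_lt he i.isLt)), extb, dif_neg h]

def ThreatB {n : ℕ} (b : Fin n → Option Letter) : Prop :=
  ∃ (i : Fin n) (x : Letter), b i = none ∧ Achieves SOSO (Function.update b i (some x))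

lemma threat_iff {n : ℕ} (b : Fin n → Option Letter) :
    ThreatB b ↔ Thr (extb b) n := by
  constructor
  · rintro ⟨i, x, hnone, hach⟩
    refine ⟨i.val, x, i.isLt, ?_, ?_⟩
    · rw [extb_lt b i.isLt]; simpa using hnone
    · rw [← extb_update]; exact (achieves_iff _).mp hach
  · rintro ⟨k, x, hk, hnone, hach⟩
    refine ⟨⟨k, hk⟩, x, ?_, ?_⟩
    · rw [← extb_lt b hk]; exact hnone
    · rw [achieves_iff, extb_update]; exact hach

lemma exists_safe {n : ℕ} (b : Fin n → Option Letter) (i : Fin n) (hi : b i = none)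
    (hleft : ∀ j : Fin n, j < i → b j ≠ none)
    (hT : ¬ ThreatB b) :
    ∃ x, ¬ Achieves SOSO (Function.update b i (some x)) ∧
      ¬ ThreatB (Function.update b i (some x)) := by
  have hT' : ¬ Thr (extb b) n := fun h => hT ((threat_iff b).mpr h)
  have hci : extb b i.val = none := by rw [extb_lt b i.isLt]; simpa using hi
  have hleft' : ∀ k, k < i.val → extb b k ≠ none := by
    intro k hk
    rw [extb_lt b (lt_trans hk i.isLt)]
    exact hleft ⟨k, lt_trans hk i.isLt⟩ hk
  obtain ⟨x, hA', hT''⟩ := core (extb b) n i.val i.isLt hci hleft' hT'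
  refine ⟨x, ?_, ?_⟩
  · rw [achieves_iff, extb_update]; exact hA'
  · rw [threat_iff, extb_update]; exact hT''

lemma card_update {n : ℕ} (b : Fin n → Option Letter) (i : Fin n) (x : Letter)
    (h : b i = none) :
    (Finset.univ.filter (fun j => Function.update b i (some x) j = none)).card + 1 =
      (Finset.univ.filter (fun j => b j = none)).card := by
  have hset : (Finset.univ.filter (fun j => Function.update b i (some x) j = none)) =
      (Finset.univ.filter (fun j => b j = none)).erase i := by
    ext j
    simp only [Finset.mem_filter, Finset.mem_erase, Finset.mem_univ, true_and,
      Function.update_apply]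
    rcases eq_or_ne j i with rfl | hj
    · simp
    · simp [hj]
  rw [hset, Finset.card_erase_of_mem (by simp [h])]
  have hpos : 0 < (Finset.univ.filter (fun j => b j = none)).card :=
    Finset.card_pos.mpr ⟨i, by simp [h]⟩
  omega

lemma main {n : ℕ} : ∀ (m : ℕ) (b : Fin n → Option Letter),
    (Finset.univ.filter (fun i => b i = none)).card = m →
    ¬ Achieves SOSO b →
    (¬ ThreatB b → ¬ Force (Achieves SOSO) m true b) ∧
      Force (Achieves SOSO) m false b := by
  intro m
  induction m with
  | zero =>
    intro b _ _
    exact ⟨fun _ h => Bool.noConfusion h, rfl⟩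
  | succ m ih =>
    intro b hc hA
    constructor
    · intro hT hF
      obtain ⟨i, x, hnone, h⟩ := hF
      have hA' : ¬ Achieves SOSO (Function.update b i (some x)) :=
        fun h' => hT ⟨i, x, hnone, h'⟩
      rcases h with h | h
      · exact hA' h
      · have hc' : (Finset.univ.filter
            (fun j => Function.update b i (some x) j = none)).card = m := by
          have := card_update b i x hnone; omega
        exact h ((ih (Function.update b i (some x)) hc' hA').2)
    · by_cases hT : ThreatB b
      · obtain ⟨i, x, hnone, hach⟩ := hT
        exact ⟨i, x, hnone, Or.inl hach⟩
      · have hne : (Finset.univ.filter (fun i => b i = none)).Nonempty := by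
          rw [← Finset.card_pos, hc]; omega
        set i := Finset.min' _ hne with hidef
        have hi : b i = none := by
          have := Finset.min'_mem _ hne
          simpa using this
        have hleft : ∀ j : Fin n, j < i → b j ≠ none := by
          intro j hj hbj
          exact absurd (Finset.min'_le _ j (by simp [hbj])) (not_le.mpr hj)
        obtain ⟨x, hA', hT'⟩ := exists_safe b i hi hleft hT
        refine ⟨i, x, hi, Or.inr ?_⟩
        have hc' : (Finset.univ.filter
            (fun j => Function.update b i (some x) j = none)).card = m := by
          have := card_update b i x hi; omega
        exact (ih (Function.update b i (some x)) hc' hA').1 hT'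


theorem soso_game_draw (n : ℕ) : IsDraw [S, O, S, O] n := by
  have hc : (Finset.univ.filter
      (fun i : Fin n => (fun _ : Fin n => (none : Option Letter)) i = none)).card = n := by
    simp
  have hA : ¬ Achieves SOSO (fun _ : Fin n => (none : Option Letter)) := by
    rintro ⟨s, h⟩
    obtain ⟨h0, e0⟩ := h 0 (by norm_num)
    cases e0
  have hT : ¬ ThreatB (fun _ : Fin n => (none : Option Letter)) := by
    rintro ⟨i, x, _, ⟨s, h⟩⟩
    obtain ⟨h0, e0⟩ := h 0 (by norm_num)
    obtain ⟨h1, e1⟩ := h 1 (by norm_num)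
    by_cases hcase : (⟨s + 1, h1⟩ : Fin n) = i
    · rw [Function.update_apply, if_neg (fun he : (⟨s + 0, h0⟩ : Fin n) = i => by
        rw [← hcase] at he
        have := congrArg Fin.val he
        simp at this)] at e0
      cases e0
    · rw [Function.update_apply, if_neg hcase] at e1
      cases e1
  obtain ⟨h1, h2⟩ := main n (fun _ : Fin n => (none : Option Letter)) hc hA
  exact ⟨h2, h1 hT⟩
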